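/- arXiv:2107.07232 — 2 statements merged into one kernel-verified Lean document; each statement's English description precedes it below -/
import Mathlib

section
/- Let P* be a probability measure on ℝ^d supported on the union of two sets M₁ and M₂ with dist(M₁, M₂) ≥ 2D (so the ball of radius D centered at any point equidistant from both sets misses the support), and suppose P*(B_{D, F⁻¹(0)}) = 0 where F : ℝ^d → ℝ^d is a bijection with L₂-Lipschitz inverse. Let P̂(A) = Q(F(A)) with Q the standard Gaussian. Then D_TV(P*, P̂) ≥ γ(d/2, D²/(2L₂²))/Γ(d/2). -/
open MeasureTheory Metric Real

noncomputable section

abbrev E (d : ℕ) := EuclideanSpace ℝ (Fin d)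

def stdGaussian (d : ℕ) : Measure (E d) :=
  volume.withDensity (fun z => ENNReal.ofReal ((2 * π) ^ (-(d : ℝ) / 2) * Real.exp (-‖z‖ ^ 2 / 2)))

def tvDist {Ω : Type*} [MeasurableSpace Ω] (P Q : Measure Ω) : ℝ :=
  ⨆ A : {s : Set Ω // MeasurableSet s}, |(P A.1).toReal - (Q A.1).toReal|

def lowerIncGamma (s x : ℝ) : ℝ := ∫ t in (0 : ℝ)..x, t ^ (s - 1) * Real.exp (-t)

lemma pointid (d : ℕ) (hd : 1 ≤ d) {y : ℝ} (hy : 0 < y) :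
    (y^2/2) ^ ((d:ℝ)/2-1) * rexp (-(y^2/2)) * y
      = 2 ^ (1-(d:ℝ)/2) * ((y:ℝ)^(d-1) * rexp (-y^2/2)) := by
  have h1 : (y^2/2 : ℝ) ^ ((d:ℝ)/2 - 1) = (y^2) ^ ((d:ℝ)/2 - 1) / 2 ^ ((d:ℝ)/2 - 1) :=
    Real.div_rpow (by positivity) (by norm_num : (0:ℝ) ≤ 2) _
  have h2 : ((y:ℝ)^2) ^ ((d:ℝ)/2 - 1) = y ^ ((d:ℝ) - 2) := by
    rw [← Real.rpow_natCast y 2, ← Real.rpow_mul hy.le]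
    ring_nf
  have h3 : (y:ℝ) ^ ((d:ℝ) - 2) * y = y ^ ((d:ℝ) - 1) := by
    rw [← Real.rpow_add_one hy.ne' ((d:ℝ)-2)]
    ring_nf
  have hyn : (y:ℝ)^(d-1) = y ^ ((d:ℝ)-1) := by
    rw [← Real.rpow_natCast y (d-1), Nat.cast_sub hd, Nat.cast_one]
  have h4 : (2:ℝ)^(1-(d:ℝ)/2) = ((2:ℝ)^((d:ℝ)/2-1))⁻¹ := by
    rw [← Real.rpow_neg (by norm_num)]
    ring_nf
  have h5 : (0:ℝ) < (2:ℝ)^((d:ℝ)/2-1) := Real.rpow_pos_of_pos (by norm_num) _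
  rw [h1, h2, hyn, h4, ← h3]
  rw [neg_div] at *
  field_simp

lemma stepB (d : ℕ) (hd : 1 ≤ d) (R : ℝ) (hR : 0 < R) :
    ∫ y in (0:ℝ)..R, (y:ℝ) ^ (d-1) * rexp (-y^2/2)
      = 2 ^ ((d:ℝ)/2 - 1) * ∫ t in (0:ℝ)..(R^2/2), t ^ ((d:ℝ)/2 - 1) * rexp (-t) := by
  set g : ℝ → ℝ := fun t => t ^ ((d:ℝ)/2 - 1) * rexp (-t) with hg
  have hmin : min (0:ℝ) R = 0 := min_eq_left hR.le
  have hmax : max (0:ℝ) R = R := max_eq_right hR.le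
  have hgi : ∀ b : ℝ, 0 ≤ b → IntegrableOn g (Set.Icc 0 b) := by
    intro b hb
    rw [← intervalIntegrable_iff_integrableOn_Icc_of_le hb]
    exact (intervalIntegral.intervalIntegrable_rpow' (by
      have : (1:ℝ) ≤ d := by exact_mod_cast hd
      linarith)).mul_continuousOn (Continuous.continuousOn (by fun_prop))
  have h0 : ∀ᵐ y : ℝ, y ≠ 0 := by
    rw [MeasureTheory.ae_iff]
    simpa using Real.volume_singleton
  have key : (∫ y in (0:ℝ)..R, (g ∘ (fun y => y^2/2)) y * y) = ∫ t in (0:ℝ)..(R^2/2), g t := by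
    have := intervalIntegral.integral_comp_mul_deriv''' (f := fun y : ℝ => y^2/2)
      (f' := fun y : ℝ => y) (g := g) (a := 0) (b := R)
      (by fun_prop)
      (fun x hx => by
        have : HasDerivAt (fun y : ℝ => y^2/2) x x := by
          simpa using (hasDerivAt_pow 2 x).div_const 2
        exact this.hasDerivWithinAt)
      (by
        rw [hmin, hmax]
        rintro t ⟨y, hy, rfl⟩
        have hy0 : (0:ℝ) < y ^ 2 / 2 := by
          have := hy.1; positivity
        exact ((Real.continuousAt_rpow_const _ _ (Or.inl hy0.ne')).mul
          (by fun_prop : Continuous fun t : ℝ => rexp (-t)).continuousAt).continuousWithinAt)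
      (by
        apply (hgi (R^2/2) (by positivity)).mono_set
        rintro t ⟨y, hy, rfl⟩
        rw [Set.uIcc_of_le hR.le] at hy
        constructor
        · have := hy.1; positivity
        · have h1 : y ≤ R := hy.2
          have : y^2 ≤ R^2 := by nlinarith [hy.1]
          simp only []
          linarith)
      (by
        rw [Set.uIcc_of_le hR.le]
        have hcont : IntegrableOn (fun y : ℝ => 2 ^ (1 - (d:ℝ)/2) * ((y:ℝ) ^ (d-1) * rexp (-y^2/2))) (Set.Icc 0 R) :=
          (Continuous.integrableOn_Icc (by fun_prop))
        apply hcont.congr_fun_ae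
        filter_upwards [MeasureTheory.ae_restrict_mem measurableSet_Icc,
          MeasureTheory.ae_restrict_of_ae h0] with y hy hy0
        have hypos : 0 < y := lt_of_le_of_ne hy.1 (Ne.symm hy0)
        exact (pointid d hd hypos).symm)
    simpa using this
  rw [← hg] at *
  rw [← key, ← intervalIntegral.integral_const_mul]
  apply intervalIntegral.integral_congr_ae
  filter_upwards [h0] with y hy0 hmem
  rw [Set.uIoc_of_le hR.le] at hmem
  have hypos : 0 < y := hmem.1
  have := pointid d hd hypos
  show (y:ℝ) ^ (d-1) * rexp (-y^2/2) = 2 ^ ((d:ℝ)/2-1) * (g (y^2/2) * y)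
  have hgy : g (y^2/2) = (y^2/2) ^ ((d:ℝ)/2-1) * rexp (-(y^2/2)) := rfl
  have h4 : (2:ℝ)^(1-(d:ℝ)/2) * (2:ℝ)^((d:ℝ)/2-1) = 1 := by
    rw [← Real.rpow_add (by norm_num)]
    norm_num
  rw [hgy, this]
  linear_combination (-((y:ℝ) ^ (d - 1) * rexp (-y ^ 2 / 2))) * h4

lemma stepC (d : ℕ) (hd : 1 ≤ d) :
    (d:ℝ) * (volume (ball (0 : E d) 1)).toReal
        * ((2*π) ^ (-(d:ℝ)/2) * 2 ^ ((d:ℝ)/2-1)) = 1 / Real.Gamma ((d:ℝ)/2) := by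
  haveI : Nonempty (Fin d) := ⟨⟨0, hd⟩⟩
  have hd0 : (0:ℝ) < d := by exact_mod_cast hd
  have hΓpos : 0 < Real.Gamma ((d:ℝ)/2) := Real.Gamma_pos_of_pos (by positivity)
  have hΓ1pos : 0 < Real.Gamma ((d:ℝ)/2 + 1) := Real.Gamma_pos_of_pos (by positivity)
  have hvol : (volume (ball (0 : E d) 1)).toReal
      = π ^ ((d:ℝ)/2) / Real.Gamma ((d:ℝ)/2 + 1) := by
    rw [EuclideanSpace.volume_ball]
    simp only [Fintype.card_fin, ENNReal.ofReal_one, one_pow, one_mul]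
    rw [ENNReal.toReal_ofReal (by positivity)]
    congr 1
    rw [Real.sqrt_eq_rpow, ← Real.rpow_natCast (π ^ ((1:ℝ)/2)) d, ← Real.rpow_mul pi_pos.le]
    ring_nf
  have hΓ : Real.Gamma ((d:ℝ)/2 + 1) = ((d:ℝ)/2) * Real.Gamma ((d:ℝ)/2) :=
    Real.Gamma_add_one (by positivity)
  have hc : ((2*π):ℝ) ^ (-(d:ℝ)/2) = 2 ^ (-(d:ℝ)/2) * π ^ (-(d:ℝ)/2) :=
    Real.mul_rpow (by norm_num) pi_pos.le
  have e1 : π ^ ((d:ℝ)/2) * π ^ (-(d:ℝ)/2) = 1 := by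
    rw [← Real.rpow_add pi_pos, show (d:ℝ)/2 + -(d:ℝ)/2 = 0 by ring, Real.rpow_zero]
  have e2 : (2:ℝ) ^ (-(d:ℝ)/2) * 2 ^ ((d:ℝ)/2-1) = 1/2 := by
    rw [← Real.rpow_add (by norm_num : (0:ℝ) < 2),
      show -(d:ℝ)/2 + ((d:ℝ)/2-1) = -1 by ring, Real.rpow_neg_one]
    norm_num
  rw [hvol, hΓ, hc]
  have expand : (d:ℝ) * (π ^ ((d:ℝ)/2) / (((d:ℝ)/2) * Real.Gamma ((d:ℝ)/2)))
        * (2 ^ (-(d:ℝ)/2) * π ^ (-(d:ℝ)/2) * 2 ^ ((d:ℝ)/2-1))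
      = (π ^ ((d:ℝ)/2) * π ^ (-(d:ℝ)/2)) * ((2:ℝ) ^ (-(d:ℝ)/2) * 2 ^ ((d:ℝ)/2-1))
        * ((d:ℝ) / (((d:ℝ)/2) * Real.Gamma ((d:ℝ)/2))) := by
    ring
  rw [expand, e1, e2]
  field_simp

lemma gauss_cb (d : ℕ) (hd : 1 ≤ d) (R : ℝ) (hR : 0 < R) :
    stdGaussian d (closedBall (0 : E d) R) =
      ENNReal.ofReal ((∫ t in (0:ℝ)..(R^2/2), t ^ ((d:ℝ)/2 - 1) * rexp (-t)) / Real.Gamma ((d:ℝ)/2)) := by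
  haveI : Nonempty (Fin d) := ⟨⟨0, hd⟩⟩
  haveI : Nontrivial (E d) := inferInstance
  set c := ((2*π):ℝ) ^ (-(d:ℝ)/2) with hc
  have hcpos : 0 < c := Real.rpow_pos_of_pos (by positivity) _
  have hρcont : Continuous (fun x : E d => c * rexp (-‖x‖^2/2)) := by fun_prop
  rw [stdGaussian, withDensity_apply _ measurableSet_closedBall]
  rw [show (fun z : E d => ENNReal.ofReal ((2 * π) ^ (-(d:ℝ)/2) * rexp (-‖z‖^2/2)))
      = fun z : E d => ENNReal.ofReal (c * rexp (-‖z‖^2/2)) from rfl]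
  rw [← ofReal_integral_eq_lintegral_ofReal
    (hρcont.continuousOn.integrableOn_compact (isCompact_closedBall _ _))
    (Filter.Eventually.of_forall fun x => by positivity)]
  congr 1
  rw [← MeasureTheory.integral_indicator measurableSet_closedBall]
  have hind : ∀ x : E d, (closedBall (0:E d) R).indicator (fun x => c * rexp (-‖x‖^2/2)) x
      = (Set.Iic R).indicator (fun y : ℝ => c * rexp (-y^2/2)) ‖x‖ := by
    intro x
    by_cases h : ‖x‖ ≤ R <;>
      simp [Set.indicator_apply, mem_closedBall_zero_iff, h]
  simp_rw [hind]
  rw [MeasureTheory.integral_fun_norm_addHaar volume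
    (fun y : ℝ => (Set.Iic R).indicator (fun y => c * rexp (-y^2/2)) y)]
  rw [finrank_euclideanSpace_fin]
  have hinner : (∫ y in Set.Ioi (0:ℝ), y ^ (d-1) • (Set.Iic R).indicator (fun y => c * rexp (-y^2/2)) y)
      = c * ∫ y in (0:ℝ)..R, y ^ (d-1) * rexp (-y^2/2) := by
    have hpt : ∀ y : ℝ, y ^ (d-1) • (Set.Iic R).indicator (fun y => c * rexp (-y^2/2)) y
        = (Set.Iic R).indicator (fun y => c * (y ^ (d-1) * rexp (-y^2/2))) y := by
      intro y; by_cases h : y ∈ Set.Iic R <;> simp [Set.indicator_apply, h] <;> ring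
    simp_rw [hpt]
    rw [MeasureTheory.setIntegral_indicator measurableSet_Iic, Set.Ioi_inter_Iic,
      ← intervalIntegral.integral_of_le hR.le, intervalIntegral.integral_const_mul]
  rw [hinner, stepB d hd R hR, nsmul_eq_mul, smul_eq_mul]
  have hC := stepC d hd
  rw [measureReal_def]
  set V := (volume (ball (0 : E d) 1)).toReal
  set I := ∫ t in (0:ℝ)..(R^2/2), t ^ ((d:ℝ)/2 - 1) * rexp (-t)
  have : (d:ℝ) * (V * (c * (2 ^ ((d:ℝ)/2-1) * I)))
      = ((d:ℝ) * V * (c * 2 ^ ((d:ℝ)/2-1))) * I := by ring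
  rw [this, hC]
  ring

lemma gauss_integrable (d : ℕ) (c : ℝ) :
    Integrable (fun z : E d => c * rexp (-‖z‖^2/2)) := by
  apply Integrable.const_mul
  have h1 := (GaussianFourier.integrable_cexp_neg_mul_sq_norm_add (V := E d)
    (b := (1/2:ℂ)) (by norm_num) 0 (0 : E d)).norm
  apply h1.congr
  filter_upwards with v
  simp [Complex.norm_exp, neg_div]
  rw [← Complex.ofReal_pow, Complex.ofReal_re]
  ring

lemma stdGaussian_univ_ne_top (d : ℕ) : stdGaussian d Set.univ ≠ ⊤ := by
  rw [stdGaussian, withDensity_apply _ MeasurableSet.univ, Measure.restrict_univ,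
    ← ofReal_integral_eq_lintegral_ofReal (gauss_integrable d _)
      (Filter.Eventually.of_forall fun x => by positivity)]
  exact ENNReal.ofReal_ne_top

theorem stmt15 (d : ℕ) (hd : 1 ≤ d) (F Finv : E d → E d) (L₂ D : ℝ) (hL₂ : 0 < L₂) (hD : 0 < D)
    (hbij : Function.Bijective F)
    (hinv₁ : ∀ x, Finv (F x) = x) (hinv₂ : ∀ z, F (Finv z) = z)
    (hFinv : ∀ z₁ z₂, ‖Finv z₁ - Finv z₂‖ ≤ L₂ * ‖z₁ - z₂‖)
    (M₁ M₂ : Set (E d)) (hsep : ∀ x ∈ M₁, ∀ y ∈ M₂, 2 * D ≤ dist x y)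
    (Pstar : Measure (E d)) [IsProbabilityMeasure Pstar]
    (hsupp : Pstar (M₁ ∪ M₂)ᶜ = 0)
    (hzero : Pstar (closedBall (Finv 0) D) = 0)
    (Phat : Measure (E d)) (hPhat : ∀ A : Set (E d), MeasurableSet A → Phat A = stdGaussian d (F '' A)) :
    tvDist Pstar Phat ≥
      lowerIncGamma ((d : ℝ) / 2) (D ^ 2 / (2 * L₂ ^ 2)) / Real.Gamma ((d : ℝ) / 2) := by
  set R := D / L₂ with hRdef
  have hR : 0 < R := div_pos hD hL₂
  set A := closedBall (Finv 0) D with hA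
  have hAm : MeasurableSet A := measurableSet_closedBall
  have hRsq : R ^ 2 / 2 = D ^ 2 / (2 * L₂ ^ 2) := by
    rw [hRdef]; field_simp
  -- the closed ball of radius R around 0 is contained in F '' A
  have hsub : closedBall (0 : E d) R ⊆ F '' A := by
    intro z hz
    refine ⟨Finv z, ?_, hinv₂ z⟩
    rw [hA, mem_closedBall, dist_eq_norm]
    calc ‖Finv z - Finv 0‖ ≤ L₂ * ‖z - 0‖ := hFinv z 0
      _ = L₂ * ‖z‖ := by rw [sub_zero]
      _ ≤ L₂ * R := by
          apply mul_le_mul_of_nonneg_left _ hL₂.le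
          rw [← mem_closedBall_zero_iff]; exact hz
      _ = D := by rw [hRdef]; field_simp
  have hΓpos : 0 < Real.Gamma ((d:ℝ)/2) := Real.Gamma_pos_of_pos (by positivity)
  set v := lowerIncGamma ((d : ℝ) / 2) (D ^ 2 / (2 * L₂ ^ 2)) / Real.Gamma ((d : ℝ) / 2) with hv
  have hv0 : 0 ≤ v := by
    apply div_nonneg _ hΓpos.le
    apply intervalIntegral.integral_nonneg (by positivity)
    intro t ht
    have ht0 : 0 ≤ t := ht.1
    positivity
  have hcb : stdGaussian d (closedBall (0 : E d) R) = ENNReal.ofReal v := by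
    rw [gauss_cb d hd R hR, hv, hRsq]
    rfl
  -- Phat A is at least v
  have hfin : stdGaussian d (F '' A) ≠ ⊤ :=
    fun h => stdGaussian_univ_ne_top d (top_le_iff.mp (h ▸ measure_mono (Set.subset_univ _)))
  have h1 : v ≤ (Phat A).toReal := by
    rw [hPhat A hAm]
    calc v = (ENNReal.ofReal v).toReal := (ENNReal.toReal_ofReal hv0).symm
      _ ≤ (stdGaussian d (F '' A)).toReal := by
          apply ENNReal.toReal_mono hfin
          rw [← hcb]
          exact measure_mono hsub
  -- boundedness of the supremum
  have hPhatfin : ∀ s : Set (E d), Phat s ≠ ⊤ := by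
    intro s
    have : Phat s ≤ Phat Set.univ := measure_mono (Set.subset_univ _)
    have huniv : Phat Set.univ ≠ ⊤ := by
      rw [hPhat _ MeasurableSet.univ]
      exact fun h => stdGaussian_univ_ne_top d (top_le_iff.mp (h ▸ measure_mono (Set.subset_univ _)))
    exact fun h => huniv (top_le_iff.mp (h ▸ this))
  have bdd : BddAbove (Set.range fun s : {s : Set (E d) // MeasurableSet s} =>
      |(Pstar s.1).toReal - (Phat s.1).toReal|) := by
    refine ⟨(Pstar Set.univ).toReal + (Phat Set.univ).toReal, ?_⟩
    rintro x ⟨s, rfl⟩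
    calc |(Pstar s.1).toReal - (Phat s.1).toReal|
        ≤ |(Pstar s.1).toReal| + |(Phat s.1).toReal| := abs_sub _ _
      _ = (Pstar s.1).toReal + (Phat s.1).toReal := by
          rw [abs_of_nonneg ENNReal.toReal_nonneg, abs_of_nonneg ENNReal.toReal_nonneg]
      _ ≤ (Pstar Set.univ).toReal + (Phat Set.univ).toReal := by
          exact add_le_add
            (ENNReal.toReal_mono (measure_ne_top _ _) (measure_mono (Set.subset_univ _)))
            (ENNReal.toReal_mono (hPhatfin _) (measure_mono (Set.subset_univ _)))
  have hle : |(Pstar A).toReal - (Phat A).toReal| ≤ tvDist Pstar Phat :=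
    le_ciSup bdd ⟨A, hAm⟩
  have : |(Pstar A).toReal - (Phat A).toReal| = (Phat A).toReal := by
    rw [hzero]
    simp [abs_of_nonneg ENNReal.toReal_nonneg]
  linarith [hle, h1, this ▸ hle]
end
end

section
/- For all integers d ≥ 2 and all r > 0, the standard Gaussian measure of the ball of radius r centered at the origin in ℝ^d satisfies Q(B_{r,0}) < 4·d^{1/4}·r. -/
open MeasureTheory Metric Real

noncomputable section

lemma integrable_exp_aux (d : ℕ) :
    Integrable (fun z : E d => Real.exp (-‖z‖ ^ 2 / 2)) := by
  have hc : Integrable (fun v : E d => Complex.exp (-(1/2 : ℂ) * (‖v‖ : ℂ)^2)) := by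
    simpa using GaussianFourier.integrable_cexp_neg_mul_sq_norm_add (V := E d) (b := (1/2 : ℂ))
      (by norm_num) 0 (0 : E d)
  refine hc.norm.congr (Filter.Eventually.of_forall fun v => ?_)
  simp only [Complex.norm_exp]
  rw [show (-(1/2:ℂ)) * (‖v‖:ℂ)^2 = ((-‖v‖^2/2 : ℝ) : ℂ) by push_cast; ring, Complex.ofReal_re]

lemma integral_exp_aux (d : ℕ) :
    ∫ z : E d, Real.exp (-‖z‖ ^ 2 / 2) = (2 * π) ^ ((d : ℝ) / 2) := by
  have h := GaussianFourier.integral_rexp_neg_mul_sq_norm (V := E d) (b := (1/2 : ℝ)) (by norm_num)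
  simp only [finrank_euclideanSpace_fin] at h
  rw [show (π / (1/2 : ℝ)) = 2 * π by ring] at h
  rw [← h]
  congr 1 with v
  ring_nf

lemma stdGaussian_univ (d : ℕ) : stdGaussian d Set.univ = 1 := by
  rw [stdGaussian, withDensity_apply _ MeasurableSet.univ, Measure.restrict_univ]
  rw [← ofReal_integral_eq_lintegral_ofReal ((integrable_exp_aux d).const_mul _)
      (Filter.Eventually.of_forall fun z => by positivity)]
  rw [integral_const_mul, integral_exp_aux, ← Real.rpow_add (by positivity), neg_div,
    neg_add_cancel, Real.rpow_zero, ENNReal.ofReal_one]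

theorem stmt19 (d : ℕ) (hd : 2 ≤ d) (r : ℝ) (hr : 0 < r) :
    (stdGaussian d (closedBall 0 r)).toReal < 4 * (d : ℝ) ^ ((1 : ℝ) / 4) * r := by
  have hd1 : (1 : ℝ) ≤ (d : ℝ) ^ ((1 : ℝ) / 4) :=
    Real.one_le_rpow (by exact_mod_cast le_trans one_le_two hd) (by norm_num)
  rcases le_or_gt (1/2 : ℝ) r with h | h
  · have hle : stdGaussian d (closedBall 0 r) ≤ 1 := by
      rw [← stdGaussian_univ d]; exact measure_mono (Set.subset_univ _)
    have h1 : (stdGaussian d (closedBall 0 r)).toReal ≤ 1 := by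
      simpa using ENNReal.toReal_mono (by simp) hle
    nlinarith
  · -- small radius case
    set c : ℝ := (2 * π) ^ (-(d : ℝ) / 2) with hc
    have hcpos : 0 < c := Real.rpow_pos_of_pos (by positivity) _
    have hQ : stdGaussian d (closedBall 0 r)
        ≤ ENNReal.ofReal c * volume (closedBall (0 : E d) r) := by
      rw [stdGaussian, withDensity_apply _ measurableSet_closedBall]
      calc ∫⁻ z in closedBall (0 : E d) r, ENNReal.ofReal (c * Real.exp (-‖z‖ ^ 2 / 2))
          ≤ ∫⁻ _ in closedBall (0 : E d) r, ENNReal.ofReal c := by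
            refine lintegral_mono fun z => ENNReal.ofReal_le_ofReal ?_
            nlinarith [Real.exp_le_one_iff.mpr (show -‖z‖^2/2 ≤ 0 by nlinarith [sq_nonneg ‖z‖]),
              Real.exp_pos (-‖z‖^2/2)]
        _ = ENNReal.ofReal c * volume (closedBall (0 : E d) r) := setLIntegral_const _ _
    have hvol : volume (closedBall (0 : E d) r)
        = ENNReal.ofReal (r ^ d * (Real.sqrt π ^ d / Real.Gamma (d / 2 + 1))) := by
      haveI : Nonempty (Fin d) := ⟨⟨0, by omega⟩⟩
      rw [EuclideanSpace.volume_closedBall]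
      rw [← ENNReal.ofReal_pow hr.le, ← ENNReal.ofReal_mul (by positivity)]
      simp
    have hGamma : (1 : ℝ) ≤ Real.Gamma ((d : ℝ) / 2 + 1) := by
      have h2 : (2 : ℝ) ≤ (d : ℝ) / 2 + 1 := by
        have : (2 : ℝ) ≤ (d : ℝ) := by exact_mod_cast hd
        linarith
      calc (1 : ℝ) = Real.Gamma 2 := Real.Gamma_two.symm
        _ ≤ Real.Gamma ((d : ℝ) / 2 + 1) :=
          Real.Gamma_strictMonoOn_Ici.monotoneOn (by simp) h2 h2
    have hGpos : 0 < Real.Gamma ((d : ℝ) / 2 + 1) := lt_of_lt_of_le one_pos hGamma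
    have key : (stdGaussian d (closedBall 0 r)).toReal
        ≤ c * (r ^ d * (Real.sqrt π ^ d / Real.Gamma (d / 2 + 1))) := by
      have := ENNReal.toReal_mono (by rw [hvol, ← ENNReal.ofReal_mul hcpos.le]; exact ENNReal.ofReal_ne_top) hQ
      rwa [hvol, ← ENNReal.ofReal_mul hcpos.le, ENNReal.toReal_ofReal (by positivity)] at this
    have hrhs : c * (r ^ d * (Real.sqrt π ^ d / Real.Gamma (d / 2 + 1))) < 4 * (d : ℝ) ^ ((1 : ℝ) / 4) * r := by
      have hA : c ≤ 1 := Real.rpow_le_one_of_one_le_of_nonpos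
        (by nlinarith [Real.pi_gt_three]) (by
          have : (0:ℝ) ≤ (d:ℝ) := Nat.cast_nonneg d
          linarith)
      have hB : Real.sqrt π ≤ 2 := by
        rw [show (2:ℝ) = Real.sqrt 4 by rw [show (4:ℝ) = 2^2 by norm_num, Real.sqrt_sq]; norm_num]
        exact Real.sqrt_le_sqrt (by nlinarith [Real.pi_lt_d2])
      have hprod : r ^ d * Real.sqrt π ^ d ≤ 2 * r := by
        have h1 : r ^ d * Real.sqrt π ^ d = (r * Real.sqrt π) ^ d := (mul_pow _ _ _).symm
        have h2 : r * Real.sqrt π ≤ 1 := by nlinarith [Real.sqrt_nonneg π]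
        have h3 : 0 < r * Real.sqrt π := by positivity
        calc r ^ d * Real.sqrt π ^ d = (r * Real.sqrt π) ^ d := h1
          _ ≤ (r * Real.sqrt π) ^ 1 := pow_le_pow_of_le_one h3.le h2 (le_trans one_le_two hd)
          _ = r * Real.sqrt π := pow_one _
          _ ≤ 2 * r := by nlinarith [Real.sqrt_nonneg π]
      have hdiv : r ^ d * (Real.sqrt π ^ d / Real.Gamma (d / 2 + 1)) ≤ 2 * r := by
        rw [mul_div_assoc']
        exact le_trans (div_le_self (by positivity) hGamma) hprod
      have hX : (0:ℝ) ≤ r ^ d * (Real.sqrt π ^ d / Real.Gamma (d / 2 + 1)) :=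
        mul_nonneg (by positivity) (div_nonneg (by positivity) hGpos.le)
      nlinarith [mul_le_mul hA hdiv hX zero_le_one, mul_le_mul_of_nonneg_right hd1 hr.le]
    exact lt_of_le_of_lt key hrhs
end
end
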